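/- Let K be a compact topological group with Haar probability measure m, and let C, D ⊆ K be Borel sets with positive Haar measure. Define the open set U := {k ∈ K : m(C ∩ k·D) > 0}. Then there exists a finite set F ⊆ K with |F| ≤ ⌊1/(m(C)·m(D))⌋ such that F·U = K. -/

import Mathlib

open scoped Pointwise ENNReal NNReal

open MeasureTheory Set Filter

section Aux

variable {K : Type*} [Group K] [TopologicalSpace K] [IsTopologicalGroup K]
    [CompactSpace K] [T2Space K] [MeasurableSpace K] [BorelSpace K]
    (m : Measure K) [m.IsHaarMeasure] [IsProbabilityMeasure m]

/-- Measurability of `h ↦ m (C ∩ h • D)` for Borel `C`, `D`. -/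
lemma phi_measurable {C : Set K} (hC : MeasurableSet C) :
    ∀ ⦃D : Set K⦄, MeasurableSet D → Measurable (fun h : K => m (C ∩ h • D)) := by
  apply MeasurableSpace.induction_on_inter
    (C := fun D _ => Measurable fun h : K => m (C ∩ h • D))
    BorelSpace.measurable_eq isPiSystem_isOpen
  · -- empty set
    have : (fun h : K => m (C ∩ h • (∅ : Set K))) = fun _ => 0 := by
      funext h; simp
    rw [this]; exact measurable_const
  · -- open sets : lower semicontinuity
    intro D hDopen
    apply measurable_of_Ioi
    intro t
    apply IsOpen.measurableSet
    rw [isOpen_iff_mem_nhds]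
    intro h₀ h₀mem
    simp only [mem_preimage, mem_Ioi] at h₀mem
    obtain ⟨L, hLsub, hLcomp, hLt⟩ :=
      (hC.inter ((hDopen.measurableSet).const_smul h₀)).exists_lt_isCompact h₀mem
    have hLD : h₀⁻¹ • L ⊆ D := by
      intro y hy
      obtain ⟨z, hz, rfl⟩ := hy
      have := (hLsub hz).2
      obtain ⟨d, hd, rfl⟩ := this
      simpa using hd
    obtain ⟨V, hV1, hVsub⟩ :=
      compact_open_separated_mul_left (hLcomp.smul h₀⁻¹) hDopen hLD
    have hcont : ContinuousAt (fun h : K => h⁻¹ * h₀) h₀ :=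
      ((continuous_inv.mul continuous_const).continuousAt)
    have hpre : (fun h : K => h⁻¹ * h₀) ⁻¹' V ∈ nhds h₀ := by
      apply hcont.preimage_mem_nhds
      simpa using hV1
    filter_upwards [hpre] with h hh
    simp only [mem_preimage, mem_Ioi]
    have hsub : L ⊆ C ∩ h • D := by
      intro z hz
      refine ⟨(hLsub hz).1, ?_⟩
      have h1 : h⁻¹ • z ∈ D := by
        have : h⁻¹ • z ∈ (h⁻¹ * h₀) • (h₀⁻¹ • L) := by
          refine ⟨h₀⁻¹ • z, ⟨z, hz, rfl⟩, ?_⟩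
          simp [smul_smul, mul_assoc]
        have hhV : h⁻¹ * h₀ ∈ V := hh
        exact ((smul_set_subset_smul hhV).trans hVsub) this
      exact ⟨h⁻¹ • z, h1, by simp⟩
    exact lt_of_lt_of_le hLt (measure_mono hsub)
  · -- complement
    intro D hD hmeas
    have : (fun h : K => m (C ∩ h • Dᶜ)) = fun h => m C - m (C ∩ h • D) := by
      funext h
      have h1 : h • Dᶜ = (h • D)ᶜ := Set.smul_set_compl
      rw [h1, ← Set.diff_eq]
      have h2 := measure_inter_add_diff (μ := m) C (hD.const_smul h)
      have h3 : m (C ∩ h • D) ≠ ⊤ := (measure_lt_top m _).ne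
      rw [← h2]
      rw [ENNReal.add_sub_cancel_left h3]
    rw [this]
    exact measurable_const.sub hmeas
  · -- disjoint unions
    intro f hdisj hfm hmeas
    have : (fun h : K => m (C ∩ h • ⋃ i, f i)) = fun h => ∑' i, m (C ∩ h • f i) := by
      funext h
      have h1 : h • ⋃ i, f i = ⋃ i, h • f i := Set.smul_set_iUnion _ _
      rw [h1, Set.inter_iUnion]
      apply measure_iUnion
      · intro i j hij
        have hd : Disjoint (h • f i) (h • f j) := by
          apply Set.disjoint_image_of_injective (MulAction.injective h) (hdisj hij)
        exact hd.mono inter_subset_right inter_subset_right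
      · intro i
        exact hC.inter ((hfm i).const_smul h)
    rw [this]
    exact Measurable.ennreal_tsum fun i => hmeas i

end Aux

section Aux2

variable {K : Type*} [Group K] [TopologicalSpace K] [IsTopologicalGroup K]
    [CompactSpace K] [T2Space K] [MeasurableSpace K] [BorelSpace K]
    (m : Measure K) [m.IsHaarMeasure] [IsProbabilityMeasure m]

lemma smul_preimage_eq (g : K) (s : Set K) : (g * ·) ⁻¹' s = g⁻¹ • s := by
  ext x
  simp only [Set.mem_preimage]
  rw [Set.mem_smul_set_iff_inv_smul_mem]
  simp [smul_eq_mul]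

/-- The average of `m (C ∩ h • D)` over `h` equals `m C * m D`. -/
lemma avg_eq {C D : Set K} (hC : MeasurableSet C) (hD : MeasurableSet D) :
    ∫⁻ h, m (C ∩ h • D) ∂m = m C * m D := by
  set ν : Measure K := Measure.ofMeasurable (fun s _ => ∫⁻ h, m (s ∩ h • D) ∂m)
    (by simp) (by
      intro f hfm hdisj
      have : ∀ h : K, m ((⋃ i, f i) ∩ h • D) = ∑' i, m (f i ∩ h • D) := by
        intro h
        rw [Set.iUnion_inter]
        apply measure_iUnion
        · exact fun i j hij => (hdisj hij).mono inter_subset_left inter_subset_left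
        · exact fun i => (hfm i).inter (hD.const_smul h)
      simp_rw [this]
      exact lintegral_tsum fun i => (phi_measurable m (hfm i) hD).aemeasurable) with hν
  have hνapp : ∀ s : Set K, MeasurableSet s → ν s = ∫⁻ h, m (s ∩ h • D) ∂m := by
    intro s hs
    rw [hν]; exact Measure.ofMeasurable_apply s hs
  haveI hinv : ν.IsMulLeftInvariant := by
    constructor
    intro g
    apply Measure.ext
    intro s hs
    rw [Measure.map_apply (measurable_const_mul g) hs,
      hνapp _ ((measurable_const_mul g) hs), hνapp s hs]
    have : ∀ h : K, m ((g * ·) ⁻¹' s ∩ h • D) = m (s ∩ (g * h) • D) := by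
      intro h
      rw [smul_preimage_eq]
      rw [← measure_smul (μ := m) g (g⁻¹ • s ∩ h • D)]
      rw [Set.smul_set_inter, smul_inv_smul, smul_smul]
    simp_rw [this]
    exact lintegral_mul_left_eq_self (fun h => m (s ∩ h • D)) g
  have hνuniv : ν Set.univ = m D := by
    rw [hνapp _ MeasurableSet.univ]
    have : ∀ h : K, m (Set.univ ∩ h • D) = m D := by
      intro h
      rw [Set.univ_inter, measure_smul]
    simp_rw [this]
    simp
  have hνfin : IsFiniteMeasure ν := by
    constructor
    rw [hνuniv]
    exact measure_lt_top m D
  have huniq : ν = (Measure.haarScalarFactor ν m) • m :=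
    Measure.isMulInvariant_eq_smul_of_compactSpace ν m
  have h1 := congrArg (fun μ : Measure K => μ Set.univ) huniq
  have h2 := congrArg (fun μ : Measure K => μ C) huniq
  simp only [Measure.smul_apply, smul_eq_mul, measure_univ, mul_one] at h1 h2
  simp only [ENNReal.smul_def, smul_eq_mul, mul_one] at h1 h2
  rw [hνapp C hC] at h2
  rw [hνuniv] at h1
  rw [h2, ← h1, mul_comm]

end Aux2

section Aux3

variable {K : Type*} [Group K] [TopologicalSpace K] [IsTopologicalGroup K]
    [CompactSpace K] [T2Space K] [MeasurableSpace K] [BorelSpace K]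
    (m : Measure K) [m.IsHaarMeasure] [IsProbabilityMeasure m]

/-- There is a translate achieving at least the average overlap. -/
lemma exists_ge_avg {C D : Set K} (hC : MeasurableSet C) (hD : MeasurableSet D) :
    ∃ h : K, m C * m D ≤ m (C ∩ h • D) := by
  by_contra hcon
  push_neg at hcon
  set φ : K → ℝ≥0∞ := fun h => m (C ∩ h • D) with hφ
  have hφm : Measurable φ := phi_measurable m hC hD
  set α : ℝ≥0∞ := m C * m D with hα
  have hαtop : α ≠ ⊤ := ENNReal.mul_ne_top (measure_ne_top m C) (measure_ne_top m D)
  have hint : ∫⁻ h, φ h ∂m = α := avg_eq m hC hD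
  have hsub : ∫⁻ h, (α - φ h) ∂m = 0 := by
    rw [lintegral_sub hφm (by rw [hint]; exact hαtop)
      (Filter.Eventually.of_forall fun h => (hcon h).le)]
    rw [hint, lintegral_const, measure_univ, mul_one, tsub_self]
  have hae : ∀ᵐ h ∂m, α - φ h = 0 := by
    have := (lintegral_eq_zero_iff (measurable_const.sub hφm)).mp hsub
    filter_upwards [this] with h hh
    exact hh
  have : ∀ᵐ h ∂m, α ≤ φ h := hae.mono fun h hh => tsub_eq_zero_iff_le.mp hh
  obtain ⟨h, hh⟩ := this.exists
  exact absurd hh (not_le.mpr (hcon h))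

/-- For every `x` there is `g` with large overlap between `g • C` and `x • D`. -/
lemma exists_good (C D : Set K) (hC : MeasurableSet C) (hD : MeasurableSet D) (x : K) :
    ∃ g : K, m C * m D ≤ m (g • C ∩ x • D) := by
  obtain ⟨h, hh⟩ := exists_ge_avg m hC hD
  refine ⟨x * h⁻¹, ?_⟩
  have e1 : (x * h⁻¹) • C ∩ x • D = x • (h⁻¹ • C ∩ D) := by
    rw [Set.smul_set_inter, smul_smul]
  have e2 : h⁻¹ • C ∩ D = h⁻¹ • (C ∩ h • D) := by
    rw [Set.smul_set_inter, inv_smul_smul]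
  rw [e1, measure_smul, e2, measure_smul]
  exact hh

end Aux3

/-- Syndeticity index bound for the correlation set of two positive-measure Borel sets in a
compact group. -/
theorem stmt3 {K : Type*} [Group K] [TopologicalSpace K] [IsTopologicalGroup K]
    [CompactSpace K] [T2Space K] [MeasurableSpace K] [BorelSpace K]
    (m : Measure K) [m.IsHaarMeasure] [IsProbabilityMeasure m]
    (C D : Set K) (hC : MeasurableSet C) (hD : MeasurableSet D)
    (hCpos : 0 < m C) (hDpos : 0 < m D) :
    ∃ F : Finset K, F.card ≤ ⌊1 / ((m C).toReal * (m D).toReal)⌋₊ ∧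
      (F : Set K) * {k : K | 0 < m (C ∩ k • D)} = Set.univ := by
  classical
  set U : Set K := {k : K | 0 < m (C ∩ k • D)} with hU
  set α : ℝ≥0∞ := m C * m D with hα
  set N : ℕ := ⌊1 / ((m C).toReal * (m D).toReal)⌋₊ with hN
  have key : ∀ x : K, ∃ g : K, α ≤ m (g • C ∩ x • D) := fun x => exists_good m C D hC hD x
  -- translation identity
  have trans_eq : ∀ (g x : K), m (g • C ∩ x • D) = m (C ∩ (g⁻¹ * x) • D) := by
    intro g x
    rw [← measure_smul (μ := m) g⁻¹ (g • C ∩ x • D), Set.smul_set_inter, inv_smul_smul, smul_smul]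
  have main : ∀ n : ℕ,
      (∃ F : Finset K, F.card ≤ n ∧ (F : Set K) * U = Set.univ) ∨
      (∃ f x : Fin (n + 1) → K, (∀ i, α ≤ m (f i • C ∩ x i • D)) ∧
        ∀ i j : Fin (n + 1), i < j → m (f i • C ∩ x j • D) = 0) := by
    intro n
    induction n with
    | zero =>
      right
      obtain ⟨g, hg⟩ := key 1
      refine ⟨fun _ => g, fun _ => 1, fun _ => hg, fun i j hij => ?_⟩
      exact absurd hij (by omega)
    | succ n ih =>
      rcases ih with ⟨F, hcard, hcov⟩ | ⟨f, x, hbig, hdisj⟩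
      · exact Or.inl ⟨F, hcard.trans (Nat.le_succ n), hcov⟩
      by_cases hcov : ((Finset.image f Finset.univ : Finset K) : Set K) * U = Set.univ
      · refine Or.inl ⟨Finset.image f Finset.univ, ?_, hcov⟩
        calc (Finset.image f Finset.univ).card ≤ (Finset.univ : Finset (Fin (n + 1))).card :=
              Finset.card_image_le
          _ = n + 1 := by simp
      right
      obtain ⟨x', hx'⟩ := (Set.ne_univ_iff_exists_notMem _).mp hcov
      have hz : ∀ i, m (f i • C ∩ x' • D) = 0 := by
        intro i
        by_contra hne
        apply hx'
        refine ⟨f i, by simp, (f i)⁻¹ * x', ?_, by group⟩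
        rw [hU, Set.mem_setOf_eq, ← trans_eq]
        exact pos_iff_ne_zero.mpr hne
      obtain ⟨g, hg⟩ := key x'
      refine ⟨Fin.snoc f g, Fin.snoc x x', ?_, ?_⟩
      · intro i
        refine Fin.lastCases ?_ ?_ i
        · simpa [Fin.snoc_last] using hg
        · intro i'
          simpa [Fin.snoc_castSucc] using hbig i'
      · intro i j hij
        revert hij
        refine Fin.lastCases ?_ ?_ j
        · -- j = last
          intro hij
          obtain ⟨i', rfl⟩ := Fin.eq_castSucc_of_ne_last (ne_of_lt hij)
          simpa [Fin.snoc_castSucc, Fin.snoc_last] using hz i'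
        · intro j' hij'
          have hi : i ≠ Fin.last (n + 1) := by
            intro h
            rw [h] at hij'
            exact absurd hij' (not_lt.mpr (Fin.castSucc_lt_last j').le)
          obtain ⟨i', rfl⟩ := Fin.eq_castSucc_of_ne_last hi
          have : i' < j' := by
            rwa [Fin.castSucc_lt_castSucc_iff] at hij'
          simpa [Fin.snoc_castSucc] using hdisj i' j' this
  rcases main N with ⟨F, h1, h2⟩ | ⟨f, x, hbig, hdisj⟩
  · exact ⟨F, h1, h2⟩
  exfalso
  set G : Fin (N + 1) → Set K := fun i => f i • C ∩ x i • D with hG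
  have hGmeas : ∀ i, MeasurableSet (G i) := fun i =>
    (hC.const_smul (f i)).inter (hD.const_smul (x i))
  have hdisj' : Pairwise (Function.onFun (MeasureTheory.AEDisjoint m) G) := by
    intro i j hij
    rcases lt_or_gt_of_ne hij with h | h
    · refine measure_mono_null ?_ (hdisj i j h)
      intro z hz
      exact ⟨hz.1.1, hz.2.2⟩
    · refine measure_mono_null ?_ (hdisj j i h)
      intro z hz
      exact ⟨hz.2.1, hz.1.2⟩
  have hsum : ∑' i, m (G i) = m (⋃ i, G i) :=
    (measure_iUnion₀ hdisj' fun i => (hGmeas i).nullMeasurableSet).symm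
  have hle1 : ∑' i, m (G i) ≤ 1 := by
    rw [hsum]
    exact prob_le_one
  have hge : ((N : ℝ≥0∞) + 1) * α ≤ ∑' i, m (G i) := by
    rw [tsum_fintype]
    have h1 : ∀ i ∈ (Finset.univ : Finset (Fin (N + 1))), α ≤ m (G i) := fun i _ => hbig i
    calc ((N : ℝ≥0∞) + 1) * α = ∑ _i : Fin (N + 1), α := by
          rw [Finset.sum_const, Finset.card_univ, Fintype.card_fin, nsmul_eq_mul]
          push_cast
          ring
      _ ≤ ∑ i, m (G i) := Finset.sum_le_sum h1
  have hαtop : α ≠ ⊤ := ENNReal.mul_ne_top (measure_ne_top m C) (measure_ne_top m D)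
  have hα0 : α ≠ 0 := (ENNReal.mul_pos hCpos.ne' hDpos.ne').ne'
  have htR : ((N : ℝ) + 1) * α.toReal ≤ 1 := by
    have hh : ((N : ℝ≥0∞) + 1) * α ≤ 1 := hge.trans hle1
    have h2 := ENNReal.toReal_mono (by simp) hh
    rw [ENNReal.toReal_mul] at h2
    simpa [ENNReal.toReal_add] using h2
  have hpos : 0 < α.toReal := ENNReal.toReal_pos hα0 hαtop
  have hNle : ((N : ℝ) + 1) ≤ 1 / ((m C).toReal * (m D).toReal) := by
    have hαr : α.toReal = (m C).toReal * (m D).toReal := ENNReal.toReal_mul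
    rw [← hαr, le_div_iff₀ hpos]
    exact htR
  have hfloor : N + 1 ≤ N := by
    rw [hN]
    apply Nat.le_floor
    push_cast
    exact hNle
  omega
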